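/- Let (Ω, P) be a probability space, 𝓑 a finite family of events with lopsidependency graph G, and x : 𝓑 → (0,1) satisfying P[B] ≤ x(B)·∏_{B' ∈ Γ(B)} (1 − x(B')) for every B ∈ 𝓑. Then for every B ∈ 𝓑 and every subset S ⊆ 𝓑 \ {B}, P[B ∣ ⋀_{B' ∈ S} B'ᶜ] ≤ x(B) (in particular the conditioning event has positive probability). -/

import Mathlib

open MeasureTheory

private lemma biInter_union_eq {ι Ω : Type*} [DecidableEq ι] (T S : Finset ι) (f : ι → Set Ω) :
    ⋂ j ∈ T ∪ S, f j = (⋂ j ∈ T, f j) ∩ (⋂ j ∈ S, f j) := by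
  ext y; simp [Finset.mem_union, or_imp, forall_and]

private lemma lll_aux {Ω ι : Type*} [MeasurableSpace Ω]
    (P : Measure Ω) [IsProbabilityMeasure P]
    (𝓑 : Finset ι) (B : ι → Set Ω) (hmB : ∀ i, MeasurableSet (B i))
    (G : SimpleGraph ι) [DecidableRel G.Adj]
    (hlop : ∀ i ∈ 𝓑, ∀ S : Finset ι,
      (∀ j ∈ S, j ∈ 𝓑 ∧ ¬ G.Adj i j ∧ j ≠ i) →
      0 < P (⋂ j ∈ S, (B j)ᶜ) →
      ProbabilityTheory.cond P (⋂ j ∈ S, (B j)ᶜ) (B i) ≤ P (B i))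
    (x : ι → ℝ) (hx0 : ∀ i ∈ 𝓑, 0 < x i) (hx1 : ∀ i ∈ 𝓑, x i < 1)
    (hcond : ∀ i ∈ 𝓑, P (B i) ≤
      ENNReal.ofReal (x i * ∏ j ∈ 𝓑.filter (fun j => G.Adj i j), (1 - x j))) :
    ∀ n : ℕ, ∀ S : Finset ι, S.card ≤ n → ∀ i ∈ 𝓑, (∀ j ∈ S, j ∈ 𝓑 ∧ j ≠ i) →
      0 < P (⋂ j ∈ S, (B j)ᶜ) ∧
      P ((⋂ j ∈ S, (B j)ᶜ) ∩ B i) ≤ ENNReal.ofReal (x i) * P (⋂ j ∈ S, (B j)ᶜ) := by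
  classical
  have hmI : ∀ S : Finset ι, MeasurableSet (⋂ j ∈ S, (B j)ᶜ) := fun S =>
    MeasurableSet.biInter S.countable_toSet (fun j _ => (hmB j).compl)
  have hfin : ∀ S : Finset ι, P (⋂ j ∈ S, (B j)ᶜ) ≠ ⊤ := fun S => measure_ne_top P _
  -- product over a subset of the neighborhood bounds the full neighborhood product
  intro n
  induction n with
  | zero =>
    intro S hcard i hi hS
    have hS0 : S = ∅ := Finset.card_eq_zero.mp (Nat.le_zero.mp hcard)
    subst hS0
    simp only [Finset.notMem_empty, Set.iInter_of_empty, Set.iInter_univ, Set.univ_inter,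
      measure_univ]
    constructor
    · exact one_pos
    · calc P (B i) ≤ ENNReal.ofReal (x i * ∏ j ∈ 𝓑.filter (fun j => G.Adj i j), (1 - x j)) :=
            hcond i hi
        _ ≤ ENNReal.ofReal (x i * 1) := by
            apply ENNReal.ofReal_le_ofReal
            apply mul_le_mul_of_nonneg_left _ (hx0 i hi).le
            apply Finset.prod_le_one
            · intro j hj
              simp only [Finset.mem_filter] at hj
              linarith [hx1 j hj.1]
            · intro j hj
              simp only [Finset.mem_filter] at hj
              linarith [hx0 j hj.1]
        _ = ENNReal.ofReal (x i) * 1 := by rw [mul_one, mul_one]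
  | succ n IH =>
    intro S hcard i hi hS
    -- WLOG S.card = n + 1
    rcases Nat.lt_or_ge S.card (n + 1) with h | h
    · exact IH S (Nat.lt_succ_iff.mp h) i hi hS
    have hcard' : S.card = n + 1 := le_antisymm hcard h
    -- positivity of P(⋂ S)
    have hpos : 0 < P (⋂ j ∈ S, (B j)ᶜ) := by
      obtain ⟨k, hk⟩ := Finset.card_pos.mp (by omega : 0 < S.card)
      have hkB : k ∈ 𝓑 := (hS k hk).1
      have herase : (S.erase k).card ≤ n := by
        have := Finset.card_erase_of_mem hk; omega
      obtain ⟨hpos', hbnd'⟩ := IH (S.erase k) herase k hkB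
        (fun j hj => ⟨(hS j (Finset.mem_of_mem_erase hj)).1, Finset.ne_of_mem_erase hj⟩)
      have hsplit := measure_inter_add_diff (μ := P) (⋂ j ∈ S.erase k, (B j)ᶜ) (hmB k)
      have hSeq : ⋂ j ∈ S, (B j)ᶜ = (⋂ j ∈ S.erase k, (B j)ᶜ) \ B k := by
        conv_lhs => rw [← Finset.insert_erase hk]
        rw [Finset.set_biInter_insert, Set.diff_eq, Set.inter_comm]
      rw [hSeq]
      by_contra hzero
      push_neg at hzero
      have hzero' : P ((⋂ j ∈ S.erase k, (B j)ᶜ) \ B k) = 0 := le_antisymm hzero zero_le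
      rw [hzero', add_zero] at hsplit
      have hlt : P ((⋂ j ∈ S.erase k, (B j)ᶜ) ∩ B k) < P (⋂ j ∈ S.erase k, (B j)ᶜ) := by
        calc P ((⋂ j ∈ S.erase k, (B j)ᶜ) ∩ B k)
            ≤ ENNReal.ofReal (x k) * P (⋂ j ∈ S.erase k, (B j)ᶜ) := hbnd'
          _ < 1 * P (⋂ j ∈ S.erase k, (B j)ᶜ) := by
              apply ENNReal.mul_lt_mul_left hpos'.ne' (hfin _)
              rw [← ENNReal.ofReal_one]
              exact ENNReal.ofReal_lt_ofReal_iff_of_nonneg (hx0 k hkB).le |>.mpr (hx1 k hkB)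
          _ = P (⋂ j ∈ S.erase k, (B j)ᶜ) := one_mul _
      exact absurd hsplit hlt.ne
    refine ⟨hpos, ?_⟩
    -- split S into neighbors and non-neighbors of i
    set S₁ := S.filter (fun j => G.Adj i j) with hS₁def
    set S₂ := S.filter (fun j => ¬ G.Adj i j) with hS₂def
    have hunion : S₁ ∪ S₂ = S := Finset.filter_union_filter_not_eq _ S
    have hsubgen : ∀ T U : Finset ι, T ⊆ U →
        (⋂ j ∈ U, (B j)ᶜ) ⊆ ⋂ j ∈ T, (B j)ᶜ := by
      intro T U hTU y hy
      simp only [Set.mem_iInter] at *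
      exact fun j hj => hy j (hTU hj)
    have hpos2 : 0 < P (⋂ j ∈ S₂, (B j)ᶜ) :=
      lt_of_lt_of_le hpos (measure_mono (hsubgen S₂ S (Finset.filter_subset _ _)))
    -- denominator bound
    have hden : ∀ T : Finset ι, T ⊆ S₁ →
        ENNReal.ofReal (∏ j ∈ T, (1 - x j)) * P (⋂ j ∈ S₂, (B j)ᶜ)
          ≤ P (⋂ j ∈ T ∪ S₂, (B j)ᶜ) := by
      intro T
      induction T using Finset.induction_on with
      | empty => intro _; simp
      | @insert a T ha IHT =>
        intro hsub
        have hT : T ⊆ S₁ := (Finset.insert_subset_iff.mp hsub).2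
        have haS₁ : a ∈ S₁ := (Finset.insert_subset_iff.mp hsub).1
        have haS : a ∈ S := Finset.mem_of_mem_filter a haS₁
        have haB : a ∈ 𝓑 := (hS a haS).1
        have hanotin : a ∉ T ∪ S₂ := by
          simp only [Finset.mem_union, not_or]
          refine ⟨ha, ?_⟩
          simp only [hS₂def, Finset.mem_filter, not_and, not_not]
          exact fun _ => (Finset.mem_filter.mp haS₁).2
        have hsubS : T ∪ S₂ ⊆ S.erase a := fun j hj =>
          Finset.mem_erase.mpr ⟨fun h => hanotin (h ▸ hj), by
            rcases Finset.mem_union.mp hj with hj | hj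
            · exact Finset.mem_of_mem_filter j (hT hj)
            · exact Finset.mem_of_mem_filter j hj⟩
        have hcardTU : (T ∪ S₂).card ≤ n := le_trans (Finset.card_le_card hsubS)
          (by have := Finset.card_erase_of_mem haS; omega)
        obtain ⟨hposTU, hbndTU⟩ := IH (T ∪ S₂) hcardTU a haB
          (fun j hj => ⟨(hS j (Finset.mem_of_mem_erase (hsubS hj))).1, fun h => hanotin (h ▸ hj)⟩)
        have hsplit := measure_inter_add_diff (μ := P) (⋂ j ∈ T ∪ S₂, (B j)ᶜ) (hmB a)
        have heq : ⋂ j ∈ insert a T ∪ S₂, (B j)ᶜ = (⋂ j ∈ T ∪ S₂, (B j)ᶜ) \ B a := by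
          rw [Finset.insert_union, Finset.set_biInter_insert, Set.diff_eq, Set.inter_comm]
        rw [heq]
        have key : ENNReal.ofReal (1 - x a) * P (⋂ j ∈ T ∪ S₂, (B j)ᶜ)
            ≤ P ((⋂ j ∈ T ∪ S₂, (B j)ᶜ) \ B a) := by
          have h1 : ENNReal.ofReal (1 - x a) * P (⋂ j ∈ T ∪ S₂, (B j)ᶜ)
              = P (⋂ j ∈ T ∪ S₂, (B j)ᶜ)
                - ENNReal.ofReal (x a) * P (⋂ j ∈ T ∪ S₂, (B j)ᶜ) := by
            rw [ENNReal.ofReal_sub _ (hx0 a haB).le, ENNReal.ofReal_one,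
              ENNReal.sub_mul (fun _ _ => hfin _), one_mul]
          have h2 : P ((⋂ j ∈ T ∪ S₂, (B j)ᶜ) \ B a)
              = P (⋂ j ∈ T ∪ S₂, (B j)ᶜ) - P ((⋂ j ∈ T ∪ S₂, (B j)ᶜ) ∩ B a) :=
            ENNReal.eq_sub_of_add_eq (measure_ne_top P _) (by rw [add_comm]; exact hsplit)
          rw [h1, h2]
          exact tsub_le_tsub_left hbndTU _
        calc ENNReal.ofReal (∏ j ∈ insert a T, (1 - x j)) * P (⋂ j ∈ S₂, (B j)ᶜ)
            = ENNReal.ofReal (1 - x a)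
              * (ENNReal.ofReal (∏ j ∈ T, (1 - x j)) * P (⋂ j ∈ S₂, (B j)ᶜ)) := by
              rw [Finset.prod_insert ha,
                ENNReal.ofReal_mul (by linarith [hx1 a haB] : (0:ℝ) ≤ 1 - x a), mul_assoc]
          _ ≤ ENNReal.ofReal (1 - x a) * P (⋂ j ∈ T ∪ S₂, (B j)ᶜ) :=
              mul_le_mul_right (IHT hT) _
          _ ≤ P ((⋂ j ∈ T ∪ S₂, (B j)ᶜ) \ B a) := key
    -- numerator bound via lopsidependency
    have hl := hlop i hi S₂ (fun j hj => by
      have hjS : j ∈ S := Finset.mem_of_mem_filter j hj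
      exact ⟨(hS j hjS).1, (Finset.mem_filter.mp hj).2, (hS j hjS).2⟩) hpos2
    rw [ProbabilityTheory.cond_apply (hmI S₂)] at hl
    have hnum : P ((⋂ j ∈ S₂, (B j)ᶜ) ∩ B i)
        ≤ P (⋂ j ∈ S₂, (B j)ᶜ) * P (B i) :=
      (ENNReal.inv_mul_le_iff hpos2.ne' (hfin S₂)).mp hl
    -- product comparison
    set N := 𝓑.filter (fun j => G.Adj i j) with hNdef
    have hS₁N : S₁ ⊆ N := fun j hj => Finset.mem_filter.mpr
      ⟨(hS j (Finset.mem_of_mem_filter j hj)).1, (Finset.mem_filter.mp hj).2⟩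
    have hprodle : ∏ j ∈ N, (1 - x j) ≤ ∏ j ∈ S₁, (1 - x j) := by
      rw [← Finset.prod_sdiff hS₁N]
      apply mul_le_of_le_one_left
      · exact Finset.prod_nonneg fun j hj => by
          linarith [hx1 j (hS j (Finset.mem_of_mem_filter j hj)).1]
      · apply Finset.prod_le_one
        · intro j hj
          linarith [hx1 j (Finset.mem_filter.mp (Finset.mem_sdiff.mp hj).1).1]
        · intro j hj
          linarith [hx0 j (Finset.mem_filter.mp (Finset.mem_sdiff.mp hj).1).1]
    calc P ((⋂ j ∈ S, (B j)ᶜ) ∩ B i)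
        ≤ P ((⋂ j ∈ S₂, (B j)ᶜ) ∩ B i) := measure_mono
          (Set.inter_subset_inter_left _ (hsubgen S₂ S (Finset.filter_subset _ _)))
      _ ≤ P (⋂ j ∈ S₂, (B j)ᶜ) * P (B i) := hnum
      _ ≤ P (⋂ j ∈ S₂, (B j)ᶜ) * ENNReal.ofReal (x i * ∏ j ∈ N, (1 - x j)) :=
          mul_le_mul_right (hcond i hi) _
      _ = ENNReal.ofReal (x i)
          * (ENNReal.ofReal (∏ j ∈ N, (1 - x j)) * P (⋂ j ∈ S₂, (B j)ᶜ)) := by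
          rw [ENNReal.ofReal_mul (hx0 i hi).le]; ring
      _ ≤ ENNReal.ofReal (x i)
          * (ENNReal.ofReal (∏ j ∈ S₁, (1 - x j)) * P (⋂ j ∈ S₂, (B j)ᶜ)) := by
          exact mul_le_mul_right (mul_le_mul_left (ENNReal.ofReal_le_ofReal hprodle) _) _
      _ ≤ ENNReal.ofReal (x i) * P (⋂ j ∈ S₁ ∪ S₂, (B j)ᶜ) := by
          gcongr
          exact hden S₁ (subset_refl _)
      _ = ENNReal.ofReal (x i) * P (⋂ j ∈ S, (B j)ᶜ) := by rw [hunion]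

theorem stmt_11 {Ω ι : Type*} [MeasurableSpace Ω]
    (P : Measure Ω) [IsProbabilityMeasure P]
    (𝓑 : Finset ι) (B : ι → Set Ω) (hmB : ∀ i, MeasurableSet (B i))
    (G : SimpleGraph ι) [DecidableRel G.Adj]
    (hlop : ∀ i ∈ 𝓑, ∀ S : Finset ι,
      (∀ j ∈ S, j ∈ 𝓑 ∧ ¬ G.Adj i j ∧ j ≠ i) →
      0 < P (⋂ j ∈ S, (B j)ᶜ) →
      ProbabilityTheory.cond P (⋂ j ∈ S, (B j)ᶜ) (B i) ≤ P (B i))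
    (x : ι → ℝ) (hx0 : ∀ i ∈ 𝓑, 0 < x i) (hx1 : ∀ i ∈ 𝓑, x i < 1)
    (hcond : ∀ i ∈ 𝓑, P (B i) ≤
      ENNReal.ofReal (x i * ∏ j ∈ 𝓑.filter (fun j => G.Adj i j), (1 - x j))) :
    ∀ i ∈ 𝓑, ∀ S : Finset ι, (∀ j ∈ S, j ∈ 𝓑 ∧ j ≠ i) →
      0 < P (⋂ j ∈ S, (B j)ᶜ) ∧
        ProbabilityTheory.cond P (⋂ j ∈ S, (B j)ᶜ) (B i) ≤ ENNReal.ofReal (x i) := by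
  intro i hi S hS
  obtain ⟨hpos, hbnd⟩ :=
    lll_aux P 𝓑 B hmB G hlop x hx0 hx1 hcond S.card S le_rfl i hi hS
  have hmI : MeasurableSet (⋂ j ∈ S, (B j)ᶜ) :=
    MeasurableSet.biInter S.countable_toSet (fun j _ => (hmB j).compl)
  refine ⟨hpos, ?_⟩
  rw [ProbabilityTheory.cond_apply hmI]
  calc (P (⋂ j ∈ S, (B j)ᶜ))⁻¹ * P ((⋂ j ∈ S, (B j)ᶜ) ∩ B i)
      ≤ (P (⋂ j ∈ S, (B j)ᶜ))⁻¹ * (ENNReal.ofReal (x i) * P (⋂ j ∈ S, (B j)ᶜ)) :=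
        mul_le_mul_right hbnd _
    _ = ENNReal.ofReal (x i) * ((P (⋂ j ∈ S, (B j)ᶜ))⁻¹ * P (⋂ j ∈ S, (B j)ᶜ)) := by ring
    _ = ENNReal.ofReal (x i) := by
        rw [ENNReal.inv_mul_cancel hpos.ne' (measure_ne_top P _), mul_one]
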